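/- arXiv:1110.6896 — 2 statements merged into one kernel-verified Lean document; each statement's English description precedes it below -/
import Mathlib

section
/- If Z_n → N(μ, σ²) in distribution with σ > 0 and μ ≠ 0 fixed, and c_n → ∞ is a sequence of positive reals, then c_n Z_n² → +∞ in probability, i.e. for every M > 0, P(c_n Z_n² > M) → 1. -/
open MeasureTheory ProbabilityTheory Filter Set

/-- Convergence in distribution of a sequence of real random variables to a limit law `ν`. -/
def TendstoInDist {Ω : Type*} [MeasurableSpace Ω] (μ : Measure Ω) (X : ℕ → Ω → ℝ)
    (ν : Measure ℝ) : Prop :=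
  ∀ f : BoundedContinuousFunction ℝ ℝ,
    Tendsto (fun n => ∫ ω, f (X n ω) ∂μ) atTop (nhds (∫ x, f x ∂ν))

noncomputable def bumpBCF (δ : ℝ) : BoundedContinuousFunction ℝ ℝ :=
  BoundedContinuousFunction.ofNormedAddCommGroup
    (fun x => min 1 (max 0 (2 - |x| / δ)))
    (by fun_prop) 1
    (by
      intro x
      rw [Real.norm_eq_abs, abs_le]
      refine ⟨le_trans (by norm_num) (le_min zero_le_one (le_max_left _ _)), min_le_left _ _⟩)

lemma bumpBCF_apply (δ x : ℝ) : bumpBCF δ x = min 1 (max 0 (2 - |x| / δ)) := rfl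

lemma bumpBCF_nonneg (δ x : ℝ) : 0 ≤ bumpBCF δ x :=
  le_min zero_le_one (le_max_left _ _)

lemma bumpBCF_le_one (δ x : ℝ) : bumpBCF δ x ≤ 1 := min_le_left _ _

lemma bumpBCF_eq_one {δ x : ℝ} (hδ : 0 < δ) (hx : |x| ≤ δ) : bumpBCF δ x = 1 := by
  rw [bumpBCF_apply]
  have h1 : |x| / δ ≤ 1 := (div_le_one hδ).mpr hx
  have : (1:ℝ) ≤ 2 - |x| / δ := by linarith
  rw [max_eq_right (by linarith), min_eq_left this]

lemma bumpBCF_eq_zero {δ x : ℝ} (hδ : 0 < δ) (hx : 2 * δ ≤ |x|) : bumpBCF δ x = 0 := by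
  rw [bumpBCF_apply]
  have h1 : (2:ℝ) ≤ |x| / δ := (le_div_iff₀ hδ).mpr (by linarith)
  rw [max_eq_left (by linarith), min_eq_right zero_le_one]

theorem stmt6 {Ω : Type*} [MeasurableSpace Ω] (μ : Measure Ω) [IsProbabilityMeasure μ]
    (Z : ℕ → Ω → ℝ) (hZmeas : ∀ n, Measurable (Z n))
    (m σ : ℝ) (hm : m ≠ 0) (hσ : 0 < σ)
    (hZ : TendstoInDist μ Z (gaussianReal m (Real.toNNReal (σ ^ 2))))
    (c : ℕ → ℝ) (hc_pos : ∀ n, 0 < c n) (hc : Tendsto c atTop atTop) :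
    ∀ M > (0:ℝ), Tendsto (fun n => μ {ω | M < c n * (Z n ω) ^ 2}) atTop (nhds 1) := by
  intro M hM
  set ν : Measure ℝ := gaussianReal m (Real.toNNReal (σ ^ 2)) with hν
  have hv : Real.toNNReal (σ ^ 2) ≠ 0 :=
    ne_of_gt (Real.toNNReal_pos.mpr (by positivity))
  have hν0 : ν {0} = 0 :=
    gaussianReal_absolutelyContinuous m hv (measure_singleton 0)
  have hmeasle : ∀ n, MeasurableSet {ω | c n * Z n ω ^ 2 ≤ M} := by
    intro n
    exact measurableSet_le (measurable_const.mul ((hZmeas n).pow_const 2)) measurable_const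
  -- key : complement measure tends to 0
  have key : Tendsto (fun n => μ {ω | c n * Z n ω ^ 2 ≤ M}) atTop (nhds 0) := by
    rw [ENNReal.tendsto_nhds_zero]
    intro ε hε
    obtain ⟨x, hx0, hxε⟩ := exists_between hε
    have hxt : x ≠ ⊤ := (lt_of_lt_of_le hxε le_top).ne
    set r : ℝ := x.toReal with hr
    have hr0 : 0 < r := ENNReal.toReal_pos hx0.ne' hxt
    -- choose δ with ν (Icc (-(2δ)) (2δ)) < ofReal (r/2)
    have hδex : ∃ δ : ℝ, 0 < δ ∧ ν (Icc (-(2*δ)) (2*δ)) < ENNReal.ofReal (r/2) := by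
      have hanti : Antitone (fun k : ℕ => Icc (-(1/(k+1) : ℝ)) (1/(k+1))) := by
        intro a b hab
        have h : (1:ℝ)/(b+1) ≤ 1/(a+1) := by
          apply one_div_le_one_div_of_le (by positivity)
          have : (a:ℝ) ≤ b := Nat.cast_le.mpr hab
          linarith
        exact Icc_subset_Icc (by linarith) h
      have hinter : (⋂ k : ℕ, Icc (-(1/(k+1) : ℝ)) (1/(k+1))) = {0} := by
        ext y
        simp only [mem_iInter, mem_Icc, mem_singleton_iff]
        constructor
        · intro h
          by_contra hy
          obtain ⟨k, hk⟩ := exists_nat_one_div_lt (abs_pos.mpr hy)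
          have := h k
          have : |y| ≤ 1/(k+1) := abs_le.mpr (by push_cast at this ⊢; constructor <;> linarith [this.1, this.2])
          linarith
        · rintro rfl
          intro k
          refine ⟨neg_nonpos.mpr (by positivity), by positivity⟩
      have htend : Tendsto (fun k : ℕ => ν (Icc (-(1/(k+1) : ℝ)) (1/(k+1)))) atTop
          (nhds (ν (⋂ k : ℕ, Icc (-(1/(k+1) : ℝ)) (1/(k+1))))) := by
        apply tendsto_measure_iInter_atTop
          (fun k => measurableSet_Icc.nullMeasurableSet) hanti ⟨0, measure_ne_top _ _⟩
      rw [hinter, hν0] at htend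
      have := (ENNReal.tendsto_nhds_zero.mp htend) (ENNReal.ofReal (r/2))
        (by simp [ENNReal.ofReal_pos]; linarith)
      -- need strict <; take half
      have htend2 := (ENNReal.tendsto_nhds_zero.mp htend) (ENNReal.ofReal (r/4))
        (by simp [ENNReal.ofReal_pos]; linarith)
      obtain ⟨k, hk⟩ := htend2.exists
      refine ⟨1/(k+1)/2, by positivity, ?_⟩
      have h2 : 2 * (1/(k+1)/2 : ℝ) = 1/(k+1) := by ring
      rw [h2]
      calc ν (Icc (-(1/(k+1):ℝ)) (1/(k+1))) ≤ ENNReal.ofReal (r/4) := hk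
        _ < ENNReal.ofReal (r/2) := by
            apply ENNReal.ofReal_lt_ofReal_iff_of_nonneg (by linarith) |>.mpr
            linarith
    obtain ⟨δ, hδ, hνδ⟩ := hδex
    set f := bumpBCF δ with hf
    -- limit of integrals
    have hL : (∫ y, f y ∂ν) < r := by
      have hle : (∫ y, f y ∂ν) ≤ (ν (Icc (-(2*δ)) (2*δ))).toReal := by
        rw [← measureReal_def, ← MeasureTheory.integral_indicator_one measurableSet_Icc]
        apply integral_mono (f.integrable ν)
        · exact (integrable_indicator_iff measurableSet_Icc).mpr
            ((integrableOn_const_iff).mpr (Or.inr (measure_lt_top _ _)))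
        · intro y
          by_cases hy : y ∈ Icc (-(2*δ)) (2*δ)
          · rw [indicator_of_mem hy]
            exact bumpBCF_le_one δ y
          · rw [indicator_of_notMem hy]
            have : 2 * δ ≤ |y| := by
              simp only [mem_Icc, not_and_or, not_le] at hy
              rcases hy with h | h
              · rw [abs_of_neg (by linarith)]; linarith
              · rw [abs_of_pos (by linarith)]; linarith
            rw [bumpBCF_eq_zero hδ this]
      have : (ν (Icc (-(2*δ)) (2*δ))).toReal < r/2 :=
        (ENNReal.lt_ofReal_iff_toReal_lt (measure_ne_top _ _)).mp hνδ
      linarith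
    have hint : ∀ᶠ n in atTop, (∫ ω, f (Z n ω) ∂μ) < r :=
      (hZ f).eventually (tendsto_id.eventually_lt_const hL) |>.mono (fun n hn => hn)
    -- eventually M / c n ≤ δ^2
    have hcev : ∀ᶠ n in atTop, M / δ^2 ≤ c n := hc.eventually_ge_atTop _
    filter_upwards [hint, hcev] with n hn hcn
    -- subset argument
    have hsub : {ω | c n * Z n ω ^ 2 ≤ M} ⊆ {ω | |Z n ω| ≤ δ} := by
      intro ω hω
      simp only [mem_setOf_eq] at hω ⊢
      have hc0 := hc_pos n
      have h1 : Z n ω ^ 2 ≤ M / c n := (le_div_iff₀ hc0).mpr (by linarith [hω, mul_comm (c n) (Z n ω ^ 2)])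
      have h2 : M / c n ≤ δ^2 := by
        rw [div_le_iff₀ hc0]
        calc M = (M / δ^2) * δ^2 := by field_simp
          _ ≤ c n * δ^2 := by
              apply mul_le_mul_of_nonneg_right hcn (by positivity)
          _ = δ^2 * c n := by ring
      have h3 : Z n ω ^ 2 ≤ δ^2 := le_trans h1 h2
      exact abs_le.mpr (abs_le_of_sq_le_sq' h3 hδ.le)
    have hsmeas : MeasurableSet {ω | |Z n ω| ≤ δ} :=
      measurableSet_le (hZmeas n).abs measurable_const
    have hbound : μ {ω | |Z n ω| ≤ δ} ≤ ENNReal.ofReal (∫ ω, f (Z n ω) ∂μ) := by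
      have heq : (μ {ω | |Z n ω| ≤ δ}).toReal = ∫ ω, ({ω | |Z n ω| ≤ δ}).indicator 1 ω ∂μ :=
        (MeasureTheory.integral_indicator_one hsmeas).symm
      have hmono : (∫ ω, ({ω | |Z n ω| ≤ δ}).indicator 1 ω ∂μ) ≤ ∫ ω, f (Z n ω) ∂μ := by
        apply integral_mono
        · exact (integrable_indicator_iff hsmeas).mpr
            ((integrableOn_const_iff).mpr (Or.inr (measure_lt_top _ _)))
        · refine ⟨(f.continuous.measurable.comp (hZmeas n)).aestronglyMeasurable, ?_⟩
          apply MeasureTheory.HasFiniteIntegral.of_bounded (C := ‖f‖)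
          filter_upwards with ω using f.norm_coe_le_norm _
        · intro ω
          by_cases hω : ω ∈ {ω | |Z n ω| ≤ δ}
          · rw [indicator_of_mem hω]
            simp only [Pi.one_apply]
            exact (bumpBCF_eq_one hδ hω).ge
          · rw [indicator_of_notMem hω]
            exact bumpBCF_nonneg δ _
      calc μ {ω | |Z n ω| ≤ δ} = ENNReal.ofReal ((μ {ω | |Z n ω| ≤ δ}).toReal) :=
            (ENNReal.ofReal_toReal (measure_ne_top _ _)).symm
        _ ≤ ENNReal.ofReal (∫ ω, f (Z n ω) ∂μ) := by
            apply ENNReal.ofReal_le_ofReal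
            rw [heq]; exact hmono
    calc μ {ω | c n * Z n ω ^ 2 ≤ M} ≤ μ {ω | |Z n ω| ≤ δ} := measure_mono hsub
      _ ≤ ENNReal.ofReal (∫ ω, f (Z n ω) ∂μ) := hbound
      _ ≤ ENNReal.ofReal r := ENNReal.ofReal_le_ofReal hn.le
      _ = x := ENNReal.ofReal_toReal hxt
      _ ≤ ε := hxε.le
  -- conclude
  have heq : ∀ n, μ {ω | M < c n * Z n ω ^ 2} = 1 - μ {ω | c n * Z n ω ^ 2 ≤ M} := by
    intro n
    have : {ω | M < c n * Z n ω ^ 2} = {ω | c n * Z n ω ^ 2 ≤ M}ᶜ := by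
      ext ω; simp [not_le]
    rw [this, prob_compl_eq_one_sub (hmeasle n)]
  simp only [heq]
  have := ENNReal.Tendsto.sub (tendsto_const_nhds : Tendsto (fun _ : ℕ => (1:ENNReal)) atTop (nhds 1))
    key (Or.inl ENNReal.one_ne_top)
  simpa using this
end

section
/- If √m_n (D_n − δ_n) → N(0, σ²) in distribution with σ > 0, δ_n = k/m_n^β for some k ≠ 0 and 0 < β < 1/2, and σ̂_n² → σ² > 0 in probability, then m_n D_n²/σ̂_n² → +∞ in probability. -/
open MeasureTheory ProbabilityTheory Filter Set

/-- Convergence in probability to a constant. -/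
def TendstoInProb {Ω : Type*} [MeasurableSpace Ω] (μ : Measure Ω) (X : ℕ → Ω → ℝ)
    (c : ℝ) : Prop :=
  ∀ ε > (0:ℝ), Tendsto (fun n => μ {ω | ε ≤ |X n ω - c|}) atTop (nhds 0)

noncomputable def bump (K : ℝ) : BoundedContinuousFunction ℝ ℝ :=
  BoundedContinuousFunction.mkOfBound
    ⟨fun x => min 1 (max (|x| - (K - 1)) 0), by
      exact continuous_const.min ((continuous_abs.sub continuous_const).max continuous_const)⟩
    1 (by
      intro x y
      simp only [ContinuousMap.coe_mk]
      rw [Real.dist_eq, abs_le]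
      have h1 : (0:ℝ) ≤ min 1 (max (|x| - (K-1)) 0) := le_min one_pos.le (le_max_right _ _)
      have h2 : min 1 (max (|x| - (K-1)) 0) ≤ 1 := min_le_left _ _
      have h3 : (0:ℝ) ≤ min 1 (max (|y| - (K-1)) 0) := le_min one_pos.le (le_max_right _ _)
      have h4 : min 1 (max (|y| - (K-1)) 0) ≤ 1 := min_le_left _ _
      constructor <;> linarith)

lemma bump_apply (K x : ℝ) : bump K x = min 1 (max (|x| - (K - 1)) 0) := rfl

lemma bump_nonneg (K x : ℝ) : 0 ≤ bump K x :=
  le_min one_pos.le (le_max_right _ _)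

lemma bump_le_one (K x : ℝ) : bump K x ≤ 1 := min_le_left _ _

lemma bump_eq_one (K x : ℝ) (h : K ≤ |x|) : bump K x = 1 := by
  rw [bump_apply]
  have : (1:ℝ) ≤ max (|x| - (K-1)) 0 := le_max_of_le_left (by linarith)
  exact min_eq_left this

lemma bump_le_indicator (K x : ℝ) :
    bump K x ≤ Set.indicator {y : ℝ | K - 1 ≤ |y|} 1 x := by
  by_cases h : K - 1 ≤ |x|
  · rw [Set.indicator_of_mem (show x ∈ {y : ℝ | K - 1 ≤ |y|} from h)]
    exact bump_le_one K x
  · rw [Set.indicator_of_notMem (show x ∉ {y : ℝ | K - 1 ≤ |y|} from h), bump_apply]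
    push_neg at h
    have : max (|x| - (K-1)) 0 = 0 := max_eq_right (by linarith)
    rw [this]
    exact min_le_right _ _

lemma absSet_meas (K : ℝ) : MeasurableSet {x : ℝ | K ≤ |x|} :=
  measurableSet_le measurable_const measurable_abs

lemma tight (ν : Measure ℝ) [IsProbabilityMeasure ν] (e : ℝ) (he : 0 < e) :
    ∃ K : ℝ, 1 ≤ K ∧ (ν {x | K - 1 ≤ |x|}).toReal < e := by
  have hmono : Antitone (fun j : ℕ => {x : ℝ | (j:ℝ) ≤ |x|}) := by
    intro i j hij x hx
    exact le_trans ((Nat.cast_le (α := ℝ)).mpr hij) hx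
  have hempty : (⋂ j : ℕ, {x : ℝ | (j:ℝ) ≤ |x|}) = ∅ := by
    ext x
    simp only [Set.mem_iInter, Set.mem_setOf_eq, Set.mem_empty_iff_false, iff_false, not_forall]
    obtain ⟨j, hj⟩ := exists_nat_gt (|x|)
    exact ⟨j, not_le.mpr hj⟩
  have htend : Tendsto (fun j : ℕ => ν {x : ℝ | (j:ℝ) ≤ |x|}) atTop (nhds 0) := by
    have := tendsto_measure_iInter_atTop (μ := ν) (fun j => (absSet_meas _).nullMeasurableSet)
      hmono ⟨0, measure_ne_top _ _⟩
    rw [hempty] at this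
    simpa [Function.comp_def] using this
  have : ∀ᶠ j : ℕ in atTop, ν {x : ℝ | (j:ℝ) ≤ |x|} < ENNReal.ofReal e :=
    htend.eventually_lt_const (by simpa using he)
  obtain ⟨j, hj⟩ := this.exists
  refine ⟨(j:ℝ) + 1, by linarith [Nat.cast_nonneg (α := ℝ) j], ?_⟩
  have h2 : ((j:ℝ) + 1 - 1) = (j:ℝ) := by ring
  rw [h2]
  exact ENNReal.toReal_lt_of_lt_ofReal hj

lemma meas_le_integral {Ω : Type*} [MeasurableSpace Ω] (μ : Measure Ω) [IsProbabilityMeasure μ]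
    (Z : Ω → ℝ) (hZ : Measurable Z) (K : ℝ) :
    (μ {ω | K ≤ |Z ω|}).toReal ≤ ∫ ω, bump K (Z ω) ∂μ := by
  have hS : MeasurableSet {ω | K ≤ |Z ω|} := (absSet_meas K).preimage hZ
  have hint : Integrable (fun ω => bump K (Z ω)) μ := by
    refine Integrable.mono' (integrable_const (1:ℝ)) ?_ ?_
    · exact ((bump K).continuous.measurable.comp hZ).aestronglyMeasurable
    · filter_upwards with ω
      rw [Real.norm_eq_abs, abs_of_nonneg (bump_nonneg _ _)]
      exact bump_le_one _ _
  calc (μ {ω | K ≤ |Z ω|}).toReal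
      = ∫ ω, Set.indicator {ω | K ≤ |Z ω|} (fun _ => (1:ℝ)) ω ∂μ := by
        rw [integral_indicator_const _ hS]; simp [Measure.real]
    _ ≤ ∫ ω, bump K (Z ω) ∂μ := by
        refine integral_mono ((integrable_const (1:ℝ)).indicator hS) hint ?_
        intro ω
        by_cases h : ω ∈ {ω | K ≤ |Z ω|}
        · rw [Set.indicator_of_mem h]
          exact (bump_eq_one _ _ h).ge
        · rw [Set.indicator_of_notMem h]
          exact bump_nonneg _ _

lemma integral_le_meas (ν : Measure ℝ) [IsProbabilityMeasure ν] (K : ℝ) :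
    ∫ x, bump K x ∂ν ≤ (ν {x | K - 1 ≤ |x|}).toReal := by
  have hS : MeasurableSet {x : ℝ | K - 1 ≤ |x|} := absSet_meas _
  calc ∫ x, bump K x ∂ν
      ≤ ∫ x, Set.indicator {y : ℝ | K - 1 ≤ |y|} (fun _ => (1:ℝ)) x ∂ν := by
        refine integral_mono ((bump K).integrable ν) ((integrable_const (1:ℝ)).indicator hS) ?_
        intro x
        exact bump_le_indicator K x
    _ = (ν {x | K - 1 ≤ |x|}).toReal := by rw [integral_indicator_const _ hS]; simp [Measure.real]

lemma shift_small {Ω : Type*} [MeasurableSpace Ω] (μ : Measure Ω) [IsProbabilityMeasure μ]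
    (Z : ℕ → Ω → ℝ) (hZ : ∀ n, Measurable (Z n)) (ν : Measure ℝ) [IsProbabilityMeasure ν]
    (hD : TendstoInDist μ Z ν) (a : ℕ → ℝ) (ha : Tendsto (fun n => |a n|) atTop atTop)
    (C : ℝ) :
    Tendsto (fun n => (μ {ω | |Z n ω + a n| ≤ C}).toReal) atTop (nhds 0) := by
  rw [NormedAddCommGroup.tendsto_nhds_zero]
  intro e he
  obtain ⟨K, hK1, hKe⟩ := tight ν e he
  have h1 : ∀ᶠ n in atTop, ∫ ω, bump K (Z n ω) ∂μ < e :=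
    (hD (bump K)).eventually_lt_const (lt_of_le_of_lt (integral_le_meas ν K) hKe)
  have h2 : ∀ᶠ n in atTop, K + C ≤ |a n| := ha.eventually_ge_atTop (K + C)
  filter_upwards [h1, h2] with n hn1 hn2
  rw [Real.norm_eq_abs, abs_of_nonneg ENNReal.toReal_nonneg]
  have hsub : {ω | |Z n ω + a n| ≤ C} ⊆ {ω | K ≤ |Z n ω|} := by
    intro ω hω
    simp only [Set.mem_setOf_eq] at *
    have habs : |a n| ≤ |Z n ω + a n| + |Z n ω| := by
      calc |a n| = |(Z n ω + a n) + (-(Z n ω))| := by ring_nf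
        _ ≤ |Z n ω + a n| + |(-(Z n ω))| := abs_add_le _ _
        _ = |Z n ω + a n| + |Z n ω| := by rw [abs_neg]
    linarith
  calc (μ {ω | |Z n ω + a n| ≤ C}).toReal
      ≤ (μ {ω | K ≤ |Z n ω|}).toReal :=
        ENNReal.toReal_mono (measure_ne_top _ _) (measure_mono hsub)
    _ ≤ ∫ ω, bump K (Z n ω) ∂μ := meas_le_integral μ (Z n) (hZ n) K
    _ < e := hn1

theorem stmt9 {Ω : Type*} [MeasurableSpace Ω] (μ : Measure Ω) [IsProbabilityMeasure μ]
    (D : ℕ → Ω → ℝ) (hDmeas : ∀ n, Measurable (D n))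
    (m : ℕ → ℝ) (hm_pos : ∀ n, 0 < m n) (hm : Tendsto m atTop atTop)
    (k σ β : ℝ) (hk : k ≠ 0) (hσ : 0 < σ) (hβ : β ∈ Ioo (0:ℝ) (1/2))
    (hD : TendstoInDist μ
      (fun n ω => Real.sqrt (m n) * (D n ω - k / m n ^ β))
      (gaussianReal 0 (Real.toNNReal (σ ^ 2))))
    (σhatsq : ℕ → Ω → ℝ) (hσhat_meas : ∀ n, Measurable (σhatsq n))
    (hσhat_pos : ∀ n, ∀ᵐ ω ∂μ, 0 < σhatsq n ω)
    (hσhat : TendstoInProb μ σhatsq (σ ^ 2)) :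
    ∀ M > (0:ℝ),
      Tendsto (fun n => μ {ω | M < m n * (D n ω) ^ 2 / σhatsq n ω}) atTop (nhds 1) := by
  intro M hM
  obtain ⟨hβ0, hβhalf⟩ := hβ
  set ν := gaussianReal 0 (Real.toNNReal (σ ^ 2)) with hν
  set C := Real.sqrt (M * (σ ^ 2 + 1)) with hC
  have hC0 : 0 ≤ C := Real.sqrt_nonneg _
  have hC2 : C ^ 2 = M * (σ ^ 2 + 1) := Real.sq_sqrt (by positivity)
  -- the deterministic shift
  have hZmeas : ∀ n, Measurable (fun ω => Real.sqrt (m n) * (D n ω - k / m n ^ β)) :=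
    fun n => measurable_const.mul ((hDmeas n).sub measurable_const)
  have ha : Tendsto (fun n => |Real.sqrt (m n) * (k / m n ^ β)|) atTop atTop := by
    have heq : ∀ n, |Real.sqrt (m n) * (k / m n ^ β)| = |k| * m n ^ ((1:ℝ)/2 - β) := by
      intro n
      have h1 : (0:ℝ) < m n ^ β := Real.rpow_pos_of_pos (hm_pos n) β
      rw [abs_mul, abs_div, abs_of_nonneg (Real.sqrt_nonneg _), abs_of_pos h1,
        Real.rpow_sub (hm_pos n), ← Real.sqrt_eq_rpow]
      ring
    have h2 : Tendsto (fun n => |k| * m n ^ ((1:ℝ)/2 - β)) atTop atTop := by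
      apply Tendsto.const_mul_atTop (abs_pos.mpr hk)
      exact (tendsto_rpow_atTop (by linarith)).comp hm
    exact h2.congr (fun n => (heq n).symm)
  -- the shifted sequence is small with probability → 0
  have hS2 : Tendsto (fun n => (μ {ω | |Real.sqrt (m n) * (D n ω - k / m n ^ β)
      + Real.sqrt (m n) * (k / m n ^ β)| ≤ C}).toReal) atTop (nhds 0) :=
    shift_small μ _ hZmeas ν hD _ ha C
  -- events
  have hAmeas : ∀ n, MeasurableSet {ω | M < m n * (D n ω) ^ 2 / σhatsq n ω} := fun n =>
    measurableSet_lt measurable_const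
      ((measurable_const.mul ((hDmeas n).pow_const 2)).div (hσhat_meas n))
  have hsub : ∀ n, {ω | M < m n * (D n ω) ^ 2 / σhatsq n ω}ᶜ ⊆
      ({ω | 1 ≤ |σhatsq n ω - σ ^ 2|} ∪ {ω | |Real.sqrt (m n) * (D n ω - k / m n ^ β)
        + Real.sqrt (m n) * (k / m n ^ β)| ≤ C}) ∪ {ω | ¬ 0 < σhatsq n ω} := by
    intro n ω hω
    simp only [Set.mem_compl_iff, Set.mem_setOf_eq, not_lt] at hω
    by_contra hcon
    simp only [Set.mem_union, Set.mem_setOf_eq, not_or, not_le, not_not] at hcon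
    obtain ⟨⟨h1, h2⟩, h3⟩ := hcon
    have h1' : σhatsq n ω < σ ^ 2 + 1 := by
      have := abs_lt.mp h1
      linarith [this.2]
    have hZa : Real.sqrt (m n) * (D n ω - k / m n ^ β)
        + Real.sqrt (m n) * (k / m n ^ β) = Real.sqrt (m n) * D n ω := by ring
    rw [hZa] at h2
    have e1 : (Real.sqrt (m n) * D n ω) ^ 2 = m n * (D n ω) ^ 2 := by
      rw [mul_pow, Real.sq_sqrt (hm_pos n).le]
    have h2' : C ^ 2 < (Real.sqrt (m n) * D n ω) ^ 2 := by
      nlinarith [sq_abs (Real.sqrt (m n) * D n ω), abs_nonneg (Real.sqrt (m n) * D n ω)]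
    have hq : m n * (D n ω) ^ 2 ≤ M * σhatsq n ω := (div_le_iff₀ h3).mp hω
    nlinarith [mul_lt_mul_of_pos_left h1' hM]
  -- measure bounds
  have hB3 : ∀ n, μ {ω | ¬ 0 < σhatsq n ω} = 0 := fun n => by
    have := (hσhat_pos n)
    rwa [ae_iff] at this
  have hbound : ∀ n, (μ ({ω | M < m n * (D n ω) ^ 2 / σhatsq n ω}ᶜ)).toReal ≤
      (μ {ω | 1 ≤ |σhatsq n ω - σ ^ 2|}).toReal
      + (μ {ω | |Real.sqrt (m n) * (D n ω - k / m n ^ β)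
        + Real.sqrt (m n) * (k / m n ^ β)| ≤ C}).toReal := by
    intro n
    have step : μ ({ω | M < m n * (D n ω) ^ 2 / σhatsq n ω}ᶜ) ≤
        μ {ω | 1 ≤ |σhatsq n ω - σ ^ 2|}
        + μ {ω | |Real.sqrt (m n) * (D n ω - k / m n ^ β)
          + Real.sqrt (m n) * (k / m n ^ β)| ≤ C} := by
      calc μ ({ω | M < m n * (D n ω) ^ 2 / σhatsq n ω}ᶜ)
          ≤ μ (({ω | 1 ≤ |σhatsq n ω - σ ^ 2|} ∪ {ω | |Real.sqrt (m n) * (D n ω - k / m n ^ β)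
            + Real.sqrt (m n) * (k / m n ^ β)| ≤ C}) ∪ {ω | ¬ 0 < σhatsq n ω}) :=
            measure_mono (hsub n)
        _ ≤ μ ({ω | 1 ≤ |σhatsq n ω - σ ^ 2|} ∪ {ω | |Real.sqrt (m n) * (D n ω - k / m n ^ β)
            + Real.sqrt (m n) * (k / m n ^ β)| ≤ C}) + μ {ω | ¬ 0 < σhatsq n ω} :=
            measure_union_le _ _
        _ = μ ({ω | 1 ≤ |σhatsq n ω - σ ^ 2|} ∪ {ω | |Real.sqrt (m n) * (D n ω - k / m n ^ β)
            + Real.sqrt (m n) * (k / m n ^ β)| ≤ C}) := by rw [hB3 n, add_zero]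
        _ ≤ _ := measure_union_le _ _
    calc (μ ({ω | M < m n * (D n ω) ^ 2 / σhatsq n ω}ᶜ)).toReal
        ≤ (μ {ω | 1 ≤ |σhatsq n ω - σ ^ 2|}
          + μ {ω | |Real.sqrt (m n) * (D n ω - k / m n ^ β)
            + Real.sqrt (m n) * (k / m n ^ β)| ≤ C}).toReal :=
          ENNReal.toReal_mono (by finiteness) step
      _ = _ := ENNReal.toReal_add (measure_ne_top _ _) (measure_ne_top _ _)
  have hB1 : Tendsto (fun n => (μ {ω | 1 ≤ |σhatsq n ω - σ ^ 2|}).toReal) atTop (nhds 0) := by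
    have := (ENNReal.tendsto_toReal (by simp)).comp (hσhat 1 one_pos)
    simpa [Function.comp_def] using this
  have hcompl : Tendsto (fun n =>
      (μ ({ω | M < m n * (D n ω) ^ 2 / σhatsq n ω}ᶜ)).toReal) atTop (nhds 0) := by
    have hsum : Tendsto (fun n => (μ {ω | 1 ≤ |σhatsq n ω - σ ^ 2|}).toReal
        + (μ {ω | |Real.sqrt (m n) * (D n ω - k / m n ^ β)
          + Real.sqrt (m n) * (k / m n ^ β)| ≤ C}).toReal) atTop (nhds 0) := by
      have := hB1.add hS2
      simpa using this
    exact squeeze_zero (fun n => ENNReal.toReal_nonneg) hbound hsum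
  have hkey : ∀ n, (μ {ω | M < m n * (D n ω) ^ 2 / σhatsq n ω}).toReal =
      1 - (μ ({ω | M < m n * (D n ω) ^ 2 / σhatsq n ω}ᶜ)).toReal := by
    intro n
    have h := measure_add_measure_compl (μ := μ) (hAmeas n)
    rw [measure_univ] at h
    have := congrArg ENNReal.toReal h
    rw [ENNReal.toReal_add (measure_ne_top _ _) (measure_ne_top _ _)] at this
    simp at this
    linarith
  have hreal : Tendsto (fun n =>
      (μ {ω | M < m n * (D n ω) ^ 2 / σhatsq n ω}).toReal) atTop (nhds 1) := by
    have : Tendsto (fun n =>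
        1 - (μ ({ω | M < m n * (D n ω) ^ 2 / σhatsq n ω}ᶜ)).toReal) atTop (nhds 1) := by
      have := hcompl.const_sub (1:ℝ)
      simpa using this
    exact this.congr (fun n => (hkey n).symm)
  have := (ENNReal.tendsto_toReal_iff (fun n => measure_ne_top _ _) (x := (1:ENNReal))
    (by simp)).mp (by simpa using hreal)
  exact this
end
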